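/- arXiv:1904.03642 — 5 statements merged into one kernel-verified Lean document; each statement's English description precedes it below -/
import Mathlib

section
/- Let X, Y, Z be Polish spaces and let (z,x) ↦ f_z(x) be a Borel measurable map from Z × X to Y. Suppose there exists a jointly Borel measurable map (y,z) ↦ μ_z^y from Y × Z to P(X) such that μ_z^y(f_z^{-1}(y)) = 1 for all y ∈ Y and z ∈ Z. Then there exists a Borel measurable map g : Z × Y → X such that f_z(g(z,y)) = y for all y ∈ Y and z ∈ Z. -/
open MeasureTheory Filter Topology
open scoped ENNReal NNReal BoundedContinuousFunction

/-- The Borel σ-algebra on the space of Borel probability measures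
equipped with the weak topology. -/
@[local instance]
noncomputable def probabilityMeasureBorel (α : Type*) [MeasurableSpace α] [TopologicalSpace α]
    [OpensMeasurableSpace α] : MeasurableSpace (ProbabilityMeasure α) := borel _

@[local instance]
theorem probabilityMeasureBorelSpace (α : Type*) [MeasurableSpace α] [TopologicalSpace α]
    [OpensMeasurableSpace α] : BorelSpace (ProbabilityMeasure α) := ⟨rfl⟩

/-- Evaluation of a probability measure at a fixed Borel set is a Borel measurable function
on the space of probability measures with the weak topology. -/
lemma measurable_pm_apply {X : Type*} [TopologicalSpace X] [PolishSpace X] [MeasurableSpace X]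
    [BorelSpace X] {s : Set X} (hs : MeasurableSet s) :
    Measurable fun μ : ProbabilityMeasure X => (μ : Measure X) s := by
  have h_closed : ∀ F : Set X, IsClosed F →
      Measurable fun μ : ProbabilityMeasure X => (μ : Measure X) F := by
    intro F hF
    letI := TopologicalSpace.upgradeIsCompletelyMetrizable X
    have cont : ∀ n : ℕ, Measurable fun μ : ProbabilityMeasure X =>
        ∫⁻ x, (hF.apprSeq n x : ℝ≥0∞) ∂(μ : Measure X) := by
      intro n
      have hEq : (fun μ : ProbabilityMeasure X =>
            ∫⁻ x, (hF.apprSeq n x : ℝ≥0∞) ∂(μ : Measure X))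
          = fun μ : ProbabilityMeasure X =>
            ((μ.toFiniteMeasure.testAgainstNN (hF.apprSeq n) : ℝ≥0) : ℝ≥0∞) := by
        funext μ
        rw [FiniteMeasure.testAgainstNN_coe_eq]
        rfl
      rw [hEq]
      exact (ENNReal.continuous_coe.comp
        (ProbabilityMeasure.continuous_testAgainstNN_eval _)).measurable
    exact measurable_of_tendsto_metrizable cont
      (tendsto_pi_nhds.2 fun μ =>
        HasOuterApproxClosed.tendsto_lintegral_apprSeq hF (μ : Measure X))
  have h_eq : (inferInstance : MeasurableSpace X)
      = MeasurableSpace.generateFrom {s : Set X | IsClosed s} :=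
    BorelSpace.measurable_eq.trans borel_eq_generateFrom_isClosed
  refine MeasurableSpace.induction_on_inter
    (C := fun s _ => Measurable fun μ : ProbabilityMeasure X => (μ : Measure X) s)
    h_eq isPiSystem_isClosed ?_ ?_ ?_ ?_ _ hs
  · simp only [measure_empty]
    exact measurable_const
  · exact fun t ht => h_closed t ht
  · intro t htm ih
    have hcompl : (fun μ : ProbabilityMeasure X => (μ : Measure X) tᶜ)
        = fun μ : ProbabilityMeasure X => 1 - (μ : Measure X) t := by
      funext μ
      rw [measure_compl htm (measure_ne_top _ t), measure_univ]
    rw [hcompl]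
    exact measurable_const.sub ih
  · intro g hdisj hgm ih
    have hun : (fun μ : ProbabilityMeasure X => (μ : Measure X) (⋃ i, g i))
        = fun μ : ProbabilityMeasure X => ∑' i, (μ : Measure X) (g i) := by
      funext μ
      exact measure_iUnion hdisj hgm
    rw [hun]
    exact Measurable.ennreal_tsum ih

/-- Core selection lemma: given a family of closed sets `C t` in a Polish space,
depending measurably on `t`, and a measurable family of measures giving each `C t`
measure one, there is a measurable selection of points of `C t`. -/
lemma selection_core {T Ω : Type*} [MeasurableSpace T] [TopologicalSpace Ω] [PolishSpace Ω]
    [MeasurableSpace Ω] [BorelSpace Ω] [Nonempty Ω]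
    (C : T → Set Ω) (hCc : ∀ t, IsClosed (C t))
    (hCm : MeasurableSet {p : T × Ω | p.2 ∈ C p.1})
    (ν : T → Measure Ω)
    (hνm : ∀ ⦃B : Set (T × Ω)⦄, MeasurableSet B → Measurable fun t => ν t (Prod.mk t ⁻¹' B))
    (hν1 : ∀ t, ν t (C t) = 1) :
    ∃ g : T → Ω, Measurable g ∧ ∀ t, g t ∈ C t := by
  classical
  letI := TopologicalSpace.upgradeIsCompletelyMetrizable Ω
  set u : ℕ → Ω := TopologicalSpace.denseSeq Ω with hu
  have hdense : DenseRange u := TopologicalSpace.denseRange_denseSeq Ω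
  set r : ℕ → ℝ := fun n => (1 / 2 : ℝ) ^ n with hr
  have hrpos : ∀ n, 0 < r n := fun n => pow_pos (by norm_num) n
  -- recursively defined nested sets and chosen indices
  let D : ℕ → T → Set Ω := fun n => Nat.rec (motive := fun _ => T → Set Ω) C
    (fun n Dn t => Dn t ∩ Metric.closedBall
      (u (sInf {j | 0 < ν t (Dn t ∩ Metric.closedBall (u j) (r n))})) (r n)) n
  let J : ℕ → T → ℕ := fun n t => sInf {j | 0 < ν t (D n t ∩ Metric.closedBall (u j) (r n))}
  have hD0 : ∀ t, D 0 t = C t := fun _ => rfl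
  have hDsucc : ∀ n t, D (n + 1) t = D n t ∩ Metric.closedBall (u (J n t)) (r n) :=
    fun n t => rfl
  have hDsubC : ∀ n t, D n t ⊆ C t := by
    intro n
    induction n with
    | zero => exact fun t => subset_rfl
    | succ n ih =>
      intro t
      exact Set.inter_subset_left.trans (ih t)
  have hDanti : ∀ t, Antitone fun n => D n t := by
    intro t
    apply antitone_nat_of_succ_le
    intro n
    exact Set.inter_subset_left
  -- covering by closed balls
  have hcover : ∀ (s : Set Ω) (n : ℕ), s ⊆ ⋃ j, s ∩ Metric.closedBall (u j) (r n) := by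
    intro s n x hx
    obtain ⟨j, hj⟩ := hdense.exists_dist_lt x (hrpos n)
    exact Set.mem_iUnion.2 ⟨j, hx, Metric.mem_closedBall.2 hj.le⟩
  -- positivity of the measures of the nested sets
  have hpos : ∀ n t, 0 < ν t (D n t) := by
    intro n
    induction n with
    | zero =>
      intro t
      show (0 : ℝ≥0∞) < ν t (C t)
      rw [hν1 t]
      norm_num
    | succ n ih =>
      intro t
      have hne : {j | 0 < ν t (D n t ∩ Metric.closedBall (u j) (r n))}.Nonempty := by
        have h0 : ν t (⋃ j, D n t ∩ Metric.closedBall (u j) (r n)) ≠ 0 := by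
          intro h0
          exact absurd (measure_mono_null (hcover _ n) h0) (ih t).ne'
        obtain ⟨j, hj⟩ := exists_measure_pos_of_not_measure_iUnion_null h0
        exact ⟨j, hj⟩
      exact Nat.sInf_mem hne
  have hSne : ∀ n t, {j | 0 < ν t (D n t ∩ Metric.closedBall (u j) (r n))}.Nonempty := by
    intro n t
    have h0 : ν t (⋃ j, D n t ∩ Metric.closedBall (u j) (r n)) ≠ 0 := by
      intro h0
      exact absurd (measure_mono_null (hcover _ n) h0) (hpos n t).ne'
    obtain ⟨j, hj⟩ := exists_measure_pos_of_not_measure_iUnion_null h0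
    exact ⟨j, hj⟩
  have hDne : ∀ n t, (D n t).Nonempty := fun n t =>
    nonempty_of_measure_ne_zero (hpos n t).ne'
  -- measurability of graphs and index functions
  have key : ∀ n, MeasurableSet {p : T × Ω | p.2 ∈ D n p.1} → Measurable (J n) := by
    intro n hG
    have hA : ∀ j : ℕ,
        MeasurableSet {t | 0 < ν t (D n t ∩ Metric.closedBall (u j) (r n))} := by
      intro j
      have hB : MeasurableSet {p : T × Ω | p.2 ∈ D n p.1 ∩ Metric.closedBall (u j) (r n)} := by
        have : {p : T × Ω | p.2 ∈ D n p.1 ∩ Metric.closedBall (u j) (r n)}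
            = {p : T × Ω | p.2 ∈ D n p.1} ∩ (Prod.snd ⁻¹' Metric.closedBall (u j) (r n)) := by
          ext p; simp [Set.mem_inter_iff]
        rw [this]
        exact hG.inter (measurable_snd Metric.isClosed_closedBall.measurableSet)
      have hm := hνm hB
      have heq : (fun t => ν t (Prod.mk t ⁻¹'
            {p : T × Ω | p.2 ∈ D n p.1 ∩ Metric.closedBall (u j) (r n)}))
          = fun t => ν t (D n t ∩ Metric.closedBall (u j) (r n)) := rfl
      rw [heq] at hm
      exact hm measurableSet_Ioi
    apply measurable_to_nat
    intro t
    have hJt : J n t = sInf {j | 0 < ν t (D n t ∩ Metric.closedBall (u j) (r n))} := rfl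
    have hfiber : J n ⁻¹' {J n t}
        = {s | 0 < ν s (D n s ∩ Metric.closedBall (u (J n t)) (r n))}
          ∩ ⋂ (i : ℕ) (_ : i < J n t),
            {s | 0 < ν s (D n s ∩ Metric.closedBall (u i) (r n))}ᶜ := by
      ext s
      simp only [Set.mem_preimage, Set.mem_singleton_iff, Set.mem_inter_iff, Set.mem_iInter,
        Set.mem_compl_iff, Set.mem_setOf_eq]
      constructor
      · intro hs
        constructor
        · have h1 : 0 < ν s (D n s ∩ Metric.closedBall (u (J n s)) (r n)) :=
            Nat.sInf_mem (hSne n s)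
          rw [hs] at h1
          exact h1
        · intro i hi
          have hilt : i < J n s := by rw [hs]; exact hi
          exact Nat.notMem_of_lt_sInf hilt
      · rintro ⟨h1, h2⟩
        exact le_antisymm (Nat.sInf_le h1)
          (not_lt.1 fun hlt => h2 _ hlt (Nat.sInf_mem (hSne n s)))
    rw [hfiber]
    exact (hA _).inter (MeasurableSet.iInter fun i => MeasurableSet.iInter fun _ => (hA i).compl)
  have hmeas : ∀ n, MeasurableSet {p : T × Ω | p.2 ∈ D n p.1} ∧ Measurable (J n) := by
    intro n
    induction n with
    | zero => exact ⟨hCm, key 0 hCm⟩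
    | succ n ih =>
      have hG : MeasurableSet {p : T × Ω | p.2 ∈ D (n + 1) p.1} := by
        have hset : {p : T × Ω | p.2 ∈ D (n + 1) p.1}
            = {p : T × Ω | p.2 ∈ D n p.1} ∩ {p : T × Ω | dist p.2 (u (J n p.1)) ≤ r n} := by
          ext p
          simp only [Set.mem_setOf_eq, hDsucc n p.1, Set.mem_inter_iff, Metric.mem_closedBall]
        rw [hset]
        refine ih.1.inter ?_
        have hd : Measurable fun p : T × Ω => dist p.2 (u (J n p.1)) :=
          measurable_snd.dist (measurable_from_nat.comp (ih.2.comp measurable_fst))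
        exact measurableSet_le hd measurable_const
      exact ⟨hG, key (n + 1) hG⟩
  -- the approximating centers
  let c : ℕ → T → Ω := fun n t => u (J n t)
  have hcm : ∀ n, Measurable (c n) := fun n => measurable_from_nat.comp (hmeas n).2
  have hDball : ∀ n m t, n + 1 ≤ m → D m t ⊆ Metric.closedBall (c n t) (r n) := by
    intro n m t h
    have h2 : D (n + 1) t ⊆ Metric.closedBall (c n t) (r n) := Set.inter_subset_right
    exact (hDanti t h).trans h2
  have hrmono : ∀ {N n : ℕ}, N ≤ n → r n ≤ r N := by
    intro N n h
    exact pow_le_pow_of_le_one (by norm_num) (by norm_num) h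
  have hcauchy : ∀ t, CauchySeq fun n => c n t := by
    intro t
    apply cauchySeq_of_le_tendsto_0 (fun N => 2 * r N)
    · intro n m N hn hm
      obtain ⟨w, hw⟩ := hDne (max n m + 1) t
      have hwn : w ∈ Metric.closedBall (c n t) (r n) :=
        hDball n _ t (Nat.succ_le_succ (le_max_left n m)) hw
      have hwm : w ∈ Metric.closedBall (c m t) (r m) :=
        hDball m _ t (Nat.succ_le_succ (le_max_right n m)) hw
      calc dist (c n t) (c m t) ≤ dist (c n t) w + dist w (c m t) := dist_triangle _ _ _
        _ ≤ r n + r m := by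
            rw [dist_comm (c n t) w]
            exact add_le_add (Metric.mem_closedBall.1 hwn) (Metric.mem_closedBall.1 hwm)
        _ ≤ r N + r N := add_le_add (hrmono hn) (hrmono hm)
        _ = 2 * r N := by ring
    · have h1 : Tendsto (fun N => (1 / 2 : ℝ) ^ N) atTop (𝓝 0) :=
        tendsto_pow_atTop_nhds_zero_of_lt_one (by norm_num) (by norm_num)
      have h2 : Tendsto (fun N => 2 * (1 / 2 : ℝ) ^ N) atTop (𝓝 (2 * 0)) := h1.const_mul 2
      rw [mul_zero] at h2
      exact h2
  choose g hg using fun t => cauchySeq_tendsto_of_complete (hcauchy t)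
  refine ⟨g, ?_, ?_⟩
  · exact measurable_of_tendsto_metrizable hcm (tendsto_pi_nhds.2 hg)
  · intro t
    choose w hw using fun n => hDne (n + 1) t
    have hwC : ∀ n, w n ∈ C t := fun n => hDsubC (n + 1) t (hw n)
    have hwd : ∀ n, dist (w n) (c n t) ≤ r n := fun n =>
      Metric.mem_closedBall.1 (hDball n (n + 1) t le_rfl (hw n))
    have hwt : Tendsto w atTop (𝓝 (g t)) := by
      rw [tendsto_iff_dist_tendsto_zero]
      have hbound : ∀ n, dist (w n) (g t) ≤ r n + dist (c n t) (g t) := fun n =>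
        (dist_triangle (w n) (c n t) (g t)).trans (add_le_add (hwd n) le_rfl)
      have hlim : Tendsto (fun n => r n + dist (c n t) (g t)) atTop (𝓝 0) := by
        have h1 : Tendsto r atTop (𝓝 0) :=
          tendsto_pow_atTop_nhds_zero_of_lt_one (by norm_num) (by norm_num)
        have h2 : Tendsto (fun n => dist (c n t) (g t)) atTop (𝓝 0) :=
          tendsto_iff_dist_tendsto_zero.1 (hg t)
        simpa using h1.add h2
      exact squeeze_zero (fun n => dist_nonneg) hbound hlim
    exact (hCc t).mem_of_tendsto hwt (Filter.Eventually.of_forall hwC)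

/-- Let X, Y, Z be Polish spaces and let (z,x) ↦ f_z(x) be a Borel measurable map from
Z × X to Y. Suppose there exists a jointly Borel measurable map (y,z) ↦ μ_z^y from Y × Z
to P(X) such that μ_z^y(f_z^{-1}(y)) = 1 for all y ∈ Y and z ∈ Z. Then there exists a
Borel measurable map g : Z × Y → X such that f_z(g(z,y)) = y for all y ∈ Y and z ∈ Z. -/
theorem stmt5 {X Y Z : Type*}
    [TopologicalSpace X] [PolishSpace X] [MeasurableSpace X] [BorelSpace X]
    [TopologicalSpace Y] [PolishSpace Y] [MeasurableSpace Y] [BorelSpace Y]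
    [TopologicalSpace Z] [PolishSpace Z] [MeasurableSpace Z] [BorelSpace Z]
    (f : Z × X → Y) (hf : Measurable f)
    (κ : Y × Z → ProbabilityMeasure X) (hκ : Measurable κ)
    (hκcond : ∀ y z, (κ (y, z) : Measure X) {x : X | f (z, x) = y} = 1) :
    ∃ g : Z × Y → X, Measurable g ∧ ∀ z y, f (z, g (z, y)) = y := by
  classical
  obtain hZY | hZY := isEmpty_or_nonempty (Z × Y)
  · refine ⟨fun p => (hZY.false p).elim, Subsingleton.measurable,
      fun z y => ((hZY.false (z, y)).elim)⟩
  · obtain ⟨⟨z0, y0⟩⟩ := hZY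
    have hX : Nonempty X := by
      by_contra h
      rw [not_nonempty_iff] at h
      have h1 : (κ (y0, z0) : Measure X) Set.univ = 1 := measure_univ
      rw [Set.univ_eq_empty_iff.2 h, measure_empty] at h1
      exact zero_ne_one h1
    -- the kernel associated to κ
    have hco : Measurable fun q : Y × Z => (κ q : Measure X) := by
      apply Measure.measurable_of_measurable_coe
      intro s hs
      exact (measurable_pm_apply hs).comp hκ
    let k : ProbabilityTheory.Kernel (Y × Z) X := ⟨fun q => (κ q : Measure X), hco⟩
    haveI : ProbabilityTheory.IsMarkovKernel k := ⟨fun q => (κ q).2⟩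
    -- the graph map
    set F : Z × X → Z × Y := fun w => (w.1, f w) with hF
    have hFm : Measurable F := measurable_fst.prodMk hf
    -- the family of measures on Z × X
    set ν : Z × Y → Measure (Z × X) := fun t => Measure.map (Prod.mk t.1) (κ (t.2, t.1)) with hν
    set C : Z × Y → Set (Z × X) := fun t => F ⁻¹' {t} with hC
    have hν1 : ∀ t, ν t (C t) = 1 := by
      intro t
      rw [hν]
      rw [Measure.map_apply measurable_prodMk_left (hFm (measurableSet_singleton t))]
      have hset : (Prod.mk t.1 ⁻¹' (F ⁻¹' {t})) = {x | f (t.1, x) = t.2} := by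
        ext x
        simp [hF, Prod.ext_iff]
      rw [hset]
      exact hκcond t.2 t.1
    have hνm : ∀ ⦃B : Set ((Z × Y) × (Z × X))⦄, MeasurableSet B →
        Measurable fun t => ν t (Prod.mk t ⁻¹' B) := by
      intro B hB
      set B' : Set ((Y × Z) × X) :=
        (fun q : (Y × Z) × X => ((q.1.2, q.1.1), (q.1.2, q.2))) ⁻¹' B with hB'
      have hB'm : MeasurableSet B' := by
        apply MeasurableSet.preimage hB
        exact ((measurable_snd.comp measurable_fst).prodMk
          (measurable_fst.comp measurable_fst)).prodMk
          ((measurable_snd.comp measurable_fst).prodMk measurable_snd)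
      have hkey := ProbabilityTheory.Kernel.measurable_kernel_prodMk_left (κ := k) hB'm
      have heq : (fun t : Z × Y => ν t (Prod.mk t ⁻¹' B))
          = (fun q : Y × Z => k q (Prod.mk q ⁻¹' B')) ∘ Prod.swap := by
        funext t
        simp only [Function.comp_apply, hν, Prod.swap_prod_mk]
        rw [Measure.map_apply measurable_prodMk_left (measurable_prodMk_left hB)]
        have hsets : (Prod.mk t.1 ⁻¹' (Prod.mk t ⁻¹' B)) = Prod.mk (t.2, t.1) ⁻¹' B' := by
          ext x
          simp [hB']
        rw [hsets]
        rfl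
      rw [heq]
      exact hkey.comp measurable_swap
    have hCm : MeasurableSet {p : (Z × Y) × (Z × X) | p.2 ∈ C p.1} := by
      have hset : {p : (Z × Y) × (Z × X) | p.2 ∈ C p.1} = {p | F p.2 = p.1} := by
        ext p
        simp [hC]
      rw [hset]
      exact (hFm.comp measurable_snd).stronglyMeasurable.measurableSet_eq_fun
        measurable_fst.stronglyMeasurable
    -- refine the topology on Z × X to make F continuous
    obtain ⟨τ, τle, Fcont, τpol⟩ := hFm.exists_continuous
    have hbor : (inferInstance : MeasurableSpace (Z × X)) = @borel (Z × X) τ := by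
      have h1 : @borel (Z × X) τ = @borel (Z × X) instTopologicalSpaceProd :=
        borel_eq_borel_of_le (t := τ) (t' := instTopologicalSpaceProd) τpol inferInstance τle
      have h2 : (inferInstance : MeasurableSpace (Z × X))
          = @borel (Z × X) instTopologicalSpaceProd :=
        @BorelSpace.measurable_eq (Z × X) instTopologicalSpaceProd _ inferInstance
      exact h2.trans h1.symm
    have hCc : ∀ t, @IsClosed (Z × X) τ (C t) := fun t =>
      @IsClosed.preimage (Z × X) (Z × Y) τ _ F Fcont {t} isClosed_singleton
    obtain ⟨g0, hg0m, hg0⟩ :=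
      @selection_core (Z × Y) (Z × X) _ τ τpol _ ⟨hbor⟩ ⟨(z0, hX.some)⟩ C hCc hCm ν hνm hν1
    refine ⟨fun p => (g0 p).2, measurable_snd.comp hg0m, ?_⟩
    intro z y
    have h := hg0 (z, y)
    simp only [hC, Set.mem_preimage, Set.mem_singleton_iff] at h
    -- h : F (g0 (z, y)) = (z, y)
    have h1 : (g0 (z, y)).1 = z := congrArg Prod.fst h
    have h2 : f (g0 (z, y)) = y := congrArg Prod.snd h
    calc f (z, (g0 (z, y)).2) = f ((g0 (z, y)).1, (g0 (z, y)).2) := by rw [h1]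
      _ = f (g0 (z, y)) := by rw [Prod.mk.eta]
      _ = y := h2
end

section
/- Let X and Y be Polish spaces, let h : X × Y → [0,1] be a Borel function, and let μ ∈ P(X), ν ∈ P(Y). Then sup{∫_X φ dμ + ∫_Y ψ dν : φ ∈ C_b(X), ψ ∈ C_b(Y), φ(x) + ψ(y) ≤ h(x,y) for all x,y} equals the same supremum restricted to pairs with 0 ≤ φ ≤ 1 and −1 ≤ ψ ≤ 0. -/
open MeasureTheory Filter Topology
open scoped ENNReal NNReal BoundedContinuousFunction

/-- Let X and Y be Polish spaces, h : X × Y → [0,1] a Borel function, and μ ∈ P(X),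
ν ∈ P(Y). Then the supremum of ∫ φ dμ + ∫ ψ dν over pairs φ ∈ C_b(X), ψ ∈ C_b(Y) with
φ(x) + ψ(y) ≤ h(x,y) equals the same supremum restricted to pairs with 0 ≤ φ ≤ 1 and
−1 ≤ ψ ≤ 0. -/
theorem stmt11 {X Y : Type*}
    [TopologicalSpace X] [PolishSpace X] [MeasurableSpace X] [BorelSpace X]
    [TopologicalSpace Y] [PolishSpace Y] [MeasurableSpace Y] [BorelSpace Y]
    (h : X × Y → ℝ) (hmeas : Measurable h) (hrange : ∀ p, h p ∈ Set.Icc (0 : ℝ) 1)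
    (μ : Measure X) (ν : Measure Y)
    [IsProbabilityMeasure μ] [IsProbabilityMeasure ν] :
    sSup {r : ℝ | ∃ (φ : X →ᵇ ℝ) (ψ : Y →ᵇ ℝ),
        (∀ x y, φ x + ψ y ≤ h (x, y)) ∧ r = (∫ x, φ x ∂μ) + ∫ y, ψ y ∂ν} =
    sSup {r : ℝ | ∃ (φ : X →ᵇ ℝ) (ψ : Y →ᵇ ℝ),
        (∀ x y, φ x + ψ y ≤ h (x, y)) ∧ (∀ x, φ x ∈ Set.Icc (0 : ℝ) 1) ∧
        (∀ y, ψ y ∈ Set.Icc (-1 : ℝ) 0) ∧ r = (∫ x, φ x ∂μ) + ∫ y, ψ y ∂ν} := by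
  have hY : Nonempty Y := by
    by_contra hc
    rw [not_nonempty_iff] at hc
    have h1 : ν Set.univ = 1 := measure_univ
    rw [Set.univ_eq_empty_iff.mpr hc] at h1
    simp at h1
  -- the set on the right
  set S2 : Set ℝ := {r : ℝ | ∃ (φ : X →ᵇ ℝ) (ψ : Y →ᵇ ℝ),
        (∀ x y, φ x + ψ y ≤ h (x, y)) ∧ (∀ x, φ x ∈ Set.Icc (0 : ℝ) 1) ∧
        (∀ y, ψ y ∈ Set.Icc (-1 : ℝ) 0) ∧ r = (∫ x, φ x ∂μ) + ∫ y, ψ y ∂ν} with hS2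
  set S1 : Set ℝ := {r : ℝ | ∃ (φ : X →ᵇ ℝ) (ψ : Y →ᵇ ℝ),
        (∀ x y, φ x + ψ y ≤ h (x, y)) ∧ r = (∫ x, φ x ∂μ) + ∫ y, ψ y ∂ν} with hS1
  have h0mem2 : (0 : ℝ) ∈ S2 := by
    refine ⟨0, 0, fun x y => ?_, fun x => ?_, fun y => ?_, by simp⟩
    · simpa using (hrange (x, y)).1
    · simp
    · norm_num
  have h0mem1 : (0 : ℝ) ∈ S1 := by
    refine ⟨0, 0, fun x y => ?_, by simp⟩
    simpa using (hrange (x, y)).1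
  have hsub : S2 ⊆ S1 := by
    rintro r ⟨φ, ψ, hc, -, -, hr⟩
    exact ⟨φ, ψ, hc, hr⟩
  -- every element of S2 is at most 1
  have hbd2 : ∀ r ∈ S2, r ≤ 1 := by
    rintro r ⟨φ, ψ, hc, hφr, hψr, hr⟩
    have h1 : ∫ x, φ x ∂μ ≤ ∫ _x, (1 : ℝ) ∂μ :=
      integral_mono (φ.integrable μ) (integrable_const 1) (fun x => (hφr x).2)
    have h2 : ∫ y, ψ y ∂ν ≤ 0 := integral_nonpos (fun y => (hψr y).2)
    simp only [integral_const, measure_univ, ENNReal.toReal_one, probReal_univ, smul_eq_mul, one_mul] at h1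
    linarith [hr ▸ le_refl r]
  -- key reduction: any value in S1 is dominated by some value in S2
  have key : ∀ r ∈ S1, ∃ r' ∈ S2, r ≤ r' := by
    rintro r ⟨φ, ψ, hc, hr⟩
    have hbψ : BddAbove (Set.range ψ) := ψ.isBounded_range.bddAbove
    set a : ℝ := ⨆ y, ψ y with ha
    have hψa : ∀ y, ψ y ≤ a := fun y => le_ciSup hbψ y
    have hφa : ∀ x, φ x + a ≤ 1 := by
      intro x
      have : a ≤ 1 - φ x := by
        apply ciSup_le
        intro y
        have h2 := (hrange (x, y)).2
        have h3 := hc x y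
        linarith
      linarith
    set φ' : X →ᵇ ℝ := (φ + BoundedContinuousFunction.const X a) ⊔ 0 with hφ'
    set ψ' : Y →ᵇ ℝ := (ψ + BoundedContinuousFunction.const Y (-a)) ⊔
      BoundedContinuousFunction.const Y (-1) with hψ'
    have hφ'x : ∀ x, φ' x = max (φ x + a) 0 := fun x => by simp [hφ']
    have hψ'y : ∀ y, ψ' y = max (ψ y + -a) (-1) := fun y => by simp [hψ']
    refine ⟨(∫ x, φ' x ∂μ) + ∫ y, ψ' y ∂ν, ⟨φ', ψ', ?_, ?_, ?_, rfl⟩, ?_⟩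
    · intro x y
      have h0 := (hrange (x, y)).1
      have hsum := hc x y
      have h1 := hφa x
      have h2 := hψa y
      rw [hφ'x, hψ'y]
      rcases max_cases (φ x + a) 0 with ⟨e1, -⟩ | ⟨e1, -⟩ <;>
        rcases max_cases (ψ y + -a) (-1) with ⟨e2, -⟩ | ⟨e2, -⟩ <;>
        rw [e1, e2] <;> linarith
    · intro x
      rw [hφ'x]
      exact ⟨le_max_right _ _, max_le (hφa x) zero_le_one⟩
    · intro y
      rw [hψ'y]
      refine ⟨le_max_right _ _, max_le (by linarith [hψa y]) (by norm_num)⟩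
    · -- the integral does not decrease
      have hint1 : ∫ x, φ x ∂μ + a ≤ ∫ x, φ' x ∂μ := by
        have e : ∫ x, (φ x + a) ∂μ = ∫ x, φ x ∂μ + a := by
          rw [integral_add (φ.integrable μ) (integrable_const a)]
          simp
        rw [← e]
        refine integral_mono ?_ (φ'.integrable μ) (fun x => by rw [hφ'x]; exact le_max_left _ _)
        exact (φ.integrable μ).add (integrable_const a)
      have hint2 : ∫ y, ψ y ∂ν + -a ≤ ∫ y, ψ' y ∂ν := by
        have e : ∫ y, (ψ y + -a) ∂ν = ∫ y, ψ y ∂ν + -a := by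
          rw [integral_add (ψ.integrable ν) (integrable_const (-a))]
          simp
        rw [← e]
        refine integral_mono ?_ (ψ'.integrable ν) (fun y => by rw [hψ'y]; exact le_max_left _ _)
        exact (ψ.integrable ν).add (integrable_const (-a))
      rw [hr]
      linarith
  have hbd1 : ∀ r ∈ S1, r ≤ 1 := by
    intro r hr
    obtain ⟨r', hr', hle⟩ := key r hr
    exact hle.trans (hbd2 r' hr')
  apply le_antisymm
  · apply csSup_le ⟨0, h0mem1⟩
    intro r hr
    obtain ⟨r', hr', hle⟩ := key r hr
    exact hle.trans (le_csSup ⟨1, hbd2⟩ hr')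
  · exact csSup_le_csSup ⟨1, hbd1⟩ ⟨0, h0mem2⟩ hsub
end

section
/- Let X and Y be Polish spaces and let h : X × Y → [0,1] be a lower semicontinuous function. Then for all μ₁, μ₂ ∈ P(X) and ν₁, ν₂ ∈ P(Y) one has |K_h(μ₁, ν₁) − K_h(μ₂, ν₂)| ≤ ‖μ₁ − μ₂‖ + ‖ν₁ − ν₂‖, where ‖·‖ is the total variation norm. -/
open MeasureTheory Filter Topology ProbabilityTheory
open scoped ENNReal NNReal

/-- The Kantorovich transportation cost `K_h(μ,ν)`: the infimum of `∫ h dσ` over all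
measures `σ` on `X × Y` whose marginals are `μ` and `ν`. -/
noncomputable def transportCost {X Y : Type*} [MeasurableSpace X] [MeasurableSpace Y]
    (h : X × Y → ℝ) (μ : Measure X) (ν : Measure Y) : ℝ≥0∞ :=
  ⨅ σ ∈ {σ : Measure (X × Y) | σ.map Prod.fst = μ ∧ σ.map Prod.snd = ν},
    ∫⁻ p, ENNReal.ofReal (h p) ∂σ

section Aux

/-- Jordan-type decomposition of a pair of probability measures. -/
lemma jordan_decomp {α : Type*} [MeasurableSpace α] (μ₁ μ₂ : Measure α)
    [IsProbabilityMeasure μ₁] [IsProbabilityMeasure μ₂] :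
    ∃ (ξ p n : Measure α), IsFiniteMeasure ξ ∧ IsFiniteMeasure p ∧ IsFiniteMeasure n ∧
      μ₁ = ξ + p ∧ μ₂ = ξ + n ∧ p Set.univ = n Set.univ ∧
      p Set.univ ≤ (μ₁.toSignedMeasure - μ₂.toSignedMeasure).totalVariation Set.univ := by
  set s := μ₁.toSignedMeasure - μ₂.toSignedMeasure with hs
  set p := s.toJordanDecomposition.posPart with hp
  set n := s.toJordanDecomposition.negPart with hn
  have hjd : p.toSignedMeasure - n.toSignedMeasure = s := by
    conv_rhs => rw [← s.toSignedMeasure_toJordanDecomposition]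
    rfl
  have hadd : μ₁ + n = μ₂ + p := by
    have hjd' : p.toSignedMeasure - n.toSignedMeasure
        = μ₁.toSignedMeasure - μ₂.toSignedMeasure := hjd.trans hs
    have h2 := sub_eq_sub_iff_add_eq_add.mp hjd'
    have h1 : μ₁.toSignedMeasure + n.toSignedMeasure
        = μ₂.toSignedMeasure + p.toSignedMeasure := h2.symm.trans (add_comm _ _)
    rw [← Measure.toSignedMeasure_add, ← Measure.toSignedMeasure_add] at h1
    exact Measure.toSignedMeasure_eq_toSignedMeasure_iff.mp h1
  have hn_le : n ≤ μ₂ := by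
    obtain ⟨S, hSm, hpS, hnS⟩ := s.toJordanDecomposition.mutuallySingular
    rw [Measure.le_iff]
    intro A hA
    have h1 : n A ≤ n (A ∩ S) + n (A \ S) := measure_le_inter_add_diff n A S
    have h2 : n (A \ S) = 0 :=
      measure_mono_null (fun x hx => hx.2) hnS
    have h3 : p (A ∩ S) = 0 :=
      measure_mono_null (fun x hx => hx.2) hpS
    have h4 : n (A ∩ S) ≤ μ₂ (A ∩ S) + p (A ∩ S) := by
      have : n (A ∩ S) ≤ (μ₁ + n) (A ∩ S) := by
        rw [Measure.add_apply]; exact le_add_self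
      rw [hadd, Measure.add_apply] at this
      exact this
    calc n A ≤ n (A ∩ S) + n (A \ S) := h1
      _ = n (A ∩ S) := by rw [h2, add_zero]
      _ ≤ μ₂ (A ∩ S) + p (A ∩ S) := h4
      _ = μ₂ (A ∩ S) := by rw [h3, add_zero]
      _ ≤ μ₂ A := measure_mono Set.inter_subset_left
  refine ⟨μ₂ - n, p, n, ?_, inferInstance, inferInstance, ?_, ?_, ?_, ?_⟩
  · exact isFiniteMeasure_of_le μ₂ Measure.sub_le
  · -- μ₁ = (μ₂ - n) + p
    have hsub : μ₂ - n + n = μ₂ := Measure.sub_add_cancel_of_le hn_le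
    ext A hA
    have h1 : (μ₂ - n + p + n) A = (μ₁ + n) A := by
      rw [add_right_comm, hsub, hadd]
    simp only [Measure.add_apply] at h1
    have hnA : n A ≠ ∞ := measure_ne_top n A
    exact (WithTop.add_right_cancel hnA h1).symm
  · exact (Measure.sub_add_cancel_of_le hn_le).symm
  · -- p univ = n univ
    have h1 : (μ₁ + n) Set.univ = (μ₂ + p) Set.univ := by rw [hadd]
    simp only [Measure.add_apply, measure_univ] at h1
    exact ((ENNReal.add_right_inj ENNReal.one_ne_top).mp h1).symm
  · -- p univ ≤ totalVariation univ
    rw [SignedMeasure.totalVariation, Measure.add_apply]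
    exact le_self_add

/-- Normalized product measure has the prescribed marginals when masses agree. -/
lemma prod_marginals {α β : Type*} [MeasurableSpace α] [MeasurableSpace β]
    (a : Measure α) (b : Measure β) [IsFiniteMeasure a] [IsFiniteMeasure b]
    (hab : a Set.univ = b Set.univ) :
    ((a Set.univ)⁻¹ • (a.prod b)).map Prod.fst = a ∧
      ((a Set.univ)⁻¹ • (a.prod b)).map Prod.snd = b := by
  rcases eq_or_ne (a Set.univ) 0 with h0 | h0
  · have ha : a = 0 := Measure.measure_univ_eq_zero.mp h0
    have hb : b = 0 := Measure.measure_univ_eq_zero.mp (hab ▸ h0)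
    subst ha; subst hb
    simp
  · have hat : a Set.univ ≠ ∞ := measure_ne_top a _
    constructor
    · rw [Measure.map_smul, Measure.map_fst_prod, ← hab, smul_smul,
        ENNReal.inv_mul_cancel h0 hat, one_smul]
    · rw [Measure.map_smul, Measure.map_snd_prod, smul_smul,
        ENNReal.inv_mul_cancel h0 hat, one_smul]

/-- One-sided continuity of the transport cost in the first marginal. -/
lemma transport_step {X Y : Type*} [MeasurableSpace X]
    [MeasurableSpace Y] [TopologicalSpace Y] [PolishSpace Y] [BorelSpace Y]
    (h : X × Y → ℝ) (h1 : ∀ q, h q ≤ 1)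
    (μ₁ μ₂ : Measure X) (ν : Measure Y)
    [IsProbabilityMeasure μ₁] [IsProbabilityMeasure μ₂] [IsProbabilityMeasure ν] :
    transportCost h μ₁ ν ≤ transportCost h μ₂ ν +
      (μ₁.toSignedMeasure - μ₂.toSignedMeasure).totalVariation Set.univ := by
  set D := (μ₁.toSignedMeasure - μ₂.toSignedMeasure).totalVariation Set.univ with hD
  have key : ∀ σ : Measure (X × Y), σ.map Prod.fst = μ₂ → σ.map Prod.snd = ν →
      transportCost h μ₁ ν ≤ (∫⁻ q, ENNReal.ofReal (h q) ∂σ) + D := by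
    intro σ hfst hsnd
    rcases isEmpty_or_nonempty Y with hY | hY
    · exfalso
      have h0 : ν Set.univ = 1 := measure_univ
      rw [Set.univ_eq_empty_iff.mpr hY, measure_empty] at h0
      exact zero_ne_one h0
    haveI : IsProbabilityMeasure σ := by
      constructor
      have huniv : σ.map Prod.fst Set.univ = 1 := by rw [hfst]; exact measure_univ
      rwa [Measure.map_apply measurable_fst MeasurableSet.univ, Set.preimage_univ] at huniv
    obtain ⟨ξ, p, n, hξf, hpf, hnf, hμ₁, hμ₂, hpn, hpD⟩ := jordan_decomp μ₁ μ₂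
    haveI := hξf; haveI := hpf; haveI := hnf
    have hσfst : σ.fst = μ₂ := hfst
    set K := σ.condKernel with hK
    have hdis : ξ ⊗ₘ K + n ⊗ₘ K = σ := by
      rw [← Measure.compProd_add_left, ← hμ₂, ← hσfst, Measure.disintegrate]
    set τ := ξ ⊗ₘ K with hτ
    have hτle : τ ≤ σ := by
      rw [← hdis]; exact Measure.le_add_right le_rfl
    have hτfst : τ.map Prod.fst = ξ := Measure.fst_compProd ξ K
    set ν' := τ.map Prod.snd with hν'
    have hν'le : ν' ≤ ν := by
      rw [← hsnd]; exact Measure.map_mono hτle measurable_snd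
    haveI : IsFiniteMeasure ν' := isFiniteMeasure_of_le ν hν'le
    have hν'univ : ν' Set.univ = ξ Set.univ := by
      rw [hν', Measure.map_apply measurable_snd MeasurableSet.univ, Set.preimage_univ,
        ← Set.preimage_univ (f := (Prod.fst : X × Y → X)),
        ← Measure.map_apply measurable_fst MeasurableSet.univ, hτfst]
    have hsub_univ : (ν - ν') Set.univ = p Set.univ := by
      rw [Measure.sub_apply MeasurableSet.univ hν'le, hν'univ, measure_univ]
      have h1 : (1 : ℝ≥0∞) = ξ Set.univ + p Set.univ := by
        rw [← Measure.add_apply, ← hμ₁, measure_univ]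
      rw [h1, ENNReal.add_sub_cancel_left (measure_ne_top ξ _)]
    set c := ((p Set.univ)⁻¹ • (p.prod (ν - ν'))) with hc
    obtain ⟨hcfst, hcsnd⟩ := prod_marginals p (ν - ν') hsub_univ.symm
    set σ' := τ + c with hσ'
    have hfst' : σ'.map Prod.fst = μ₁ := by
      rw [hσ', Measure.map_add _ _ measurable_fst, hτfst, hcfst, ← hμ₁]
    have hsnd' : σ'.map Prod.snd = ν := by
      rw [hσ', Measure.map_add _ _ measurable_snd, ← hν', hcsnd, add_comm,
        Measure.sub_add_cancel_of_le hν'le]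
    have hle1 : transportCost h μ₁ ν ≤ ∫⁻ q, ENNReal.ofReal (h q) ∂σ' := by
      rw [transportCost]
      exact iInf₂_le σ' ⟨hfst', hsnd'⟩
    have hcuniv : c Set.univ = p Set.univ := by
      have := hcfst
      rw [← Set.preimage_univ (f := (Prod.fst : X × Y → X)),
        ← Measure.map_apply measurable_fst MeasurableSet.univ, hcfst]
    have hintc : (∫⁻ q, ENNReal.ofReal (h q) ∂c) ≤ p Set.univ := by
      calc (∫⁻ q, ENNReal.ofReal (h q) ∂c) ≤ ∫⁻ _, 1 ∂c :=
            lintegral_mono fun q => ENNReal.ofReal_le_one.mpr (h1 q)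
        _ = c Set.univ := lintegral_one
        _ = p Set.univ := hcuniv
    calc transportCost h μ₁ ν ≤ ∫⁻ q, ENNReal.ofReal (h q) ∂σ' := hle1
      _ = (∫⁻ q, ENNReal.ofReal (h q) ∂τ) + ∫⁻ q, ENNReal.ofReal (h q) ∂c :=
          lintegral_add_measure _ τ c
      _ ≤ (∫⁻ q, ENNReal.ofReal (h q) ∂σ) + D :=
          add_le_add (lintegral_mono' hτle le_rfl) (hintc.trans hpD)
  have h2 : transportCost h μ₁ ν - D ≤ transportCost h μ₂ ν := by
    rw [transportCost]
    refine le_iInf₂ fun σ hσ => ?_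
    exact tsub_le_iff_right.mpr (key σ hσ.1 hσ.2)
  calc transportCost h μ₁ ν ≤ transportCost h μ₁ ν - D + D := le_tsub_add
    _ ≤ transportCost h μ₂ ν + D := add_le_add_left h2 D

lemma transport_swap_le {X Y : Type*} [MeasurableSpace X] [MeasurableSpace Y]
    (h : X × Y → ℝ) (hm : Measurable h) (μ : Measure X) (ν : Measure Y) :
    transportCost h μ ν ≤ transportCost (fun q => h (q.2, q.1)) ν μ := by
  rw [transportCost, transportCost]
  refine le_iInf₂ fun σ hσ => ?_
  refine iInf₂_le_of_le (σ.map Prod.swap) ⟨?_, ?_⟩ ?_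
  · rw [Measure.map_map measurable_fst measurable_swap]
    exact hσ.2
  · rw [Measure.map_map measurable_snd measurable_swap]
    exact hσ.1
  · rw [lintegral_map (Measurable.ennreal_ofReal hm) measurable_swap]
    exact le_rfl

lemma transport_swap {X Y : Type*} [MeasurableSpace X] [MeasurableSpace Y]
    (h : X × Y → ℝ) (hm : Measurable h) (μ : Measure X) (ν : Measure Y) :
    transportCost h μ ν = transportCost (fun q => h (q.2, q.1)) ν μ := by
  refine le_antisymm (transport_swap_le h hm μ ν) ?_
  have := transport_swap_le (fun q : Y × X => h (q.2, q.1)) (hm.comp measurable_swap) ν μ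
  exact this

lemma transport_le_one {X Y : Type*} [MeasurableSpace X] [MeasurableSpace Y]
    (h : X × Y → ℝ) (h1 : ∀ q, h q ≤ 1) (μ : Measure X) (ν : Measure Y)
    [IsProbabilityMeasure μ] [IsProbabilityMeasure ν] :
    transportCost h μ ν ≤ 1 := by
  rw [transportCost]
  refine iInf₂_le_of_le (μ.prod ν) ⟨Measure.fst_prod, Measure.snd_prod⟩ ?_
  calc (∫⁻ q, ENNReal.ofReal (h q) ∂(μ.prod ν)) ≤ ∫⁻ _, 1 ∂(μ.prod ν) :=
        lintegral_mono fun q => ENNReal.ofReal_le_one.mpr (h1 q)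
    _ = 1 := by rw [lintegral_one, measure_univ]

end Aux

/-- Let X and Y be Polish spaces and h : X × Y → [0,1] lower semicontinuous. Then for all
probability measures μ₁, μ₂ on X and ν₁, ν₂ on Y one has
|K_h(μ₁, ν₁) − K_h(μ₂, ν₂)| ≤ ‖μ₁ − μ₂‖ + ‖ν₁ − ν₂‖, where ‖·‖ is the total variation
norm. -/
theorem stmt12 {X Y : Type*}
    [TopologicalSpace X] [PolishSpace X] [MeasurableSpace X] [BorelSpace X]
    [TopologicalSpace Y] [PolishSpace Y] [MeasurableSpace Y] [BorelSpace Y]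
    (h : X × Y → ℝ) (hlsc : LowerSemicontinuous h) (hrange : ∀ p, h p ∈ Set.Icc (0 : ℝ) 1)
    (μ₁ μ₂ : Measure X) (ν₁ ν₂ : Measure Y)
    [IsProbabilityMeasure μ₁] [IsProbabilityMeasure μ₂]
    [IsProbabilityMeasure ν₁] [IsProbabilityMeasure ν₂] :
    |(transportCost h μ₁ ν₁).toReal - (transportCost h μ₂ ν₂).toReal| ≤
      ((μ₁.toSignedMeasure - μ₂.toSignedMeasure).totalVariation Set.univ).toReal +
      ((ν₁.toSignedMeasure - ν₂.toSignedMeasure).totalVariation Set.univ).toReal := by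
  have hm : Measurable h := hlsc.measurable
  have h1 : ∀ q, h q ≤ 1 := fun q => (hrange q).2
  have h1' : ∀ q : Y × X, h (q.2, q.1) ≤ 1 := fun q => h1 _
  set Dμ := (μ₁.toSignedMeasure - μ₂.toSignedMeasure).totalVariation Set.univ with hDμ
  set Dν := (ν₁.toSignedMeasure - ν₂.toSignedMeasure).totalVariation Set.univ with hDν
  have hDμ' : (μ₂.toSignedMeasure - μ₁.toSignedMeasure).totalVariation Set.univ = Dμ := by
    rw [hDμ, ← neg_sub, SignedMeasure.totalVariation_neg]
  have hDν' : (ν₂.toSignedMeasure - ν₁.toSignedMeasure).totalVariation Set.univ = Dν := by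
    rw [hDν, ← neg_sub, SignedMeasure.totalVariation_neg]
  -- swap formulation
  have hswap : ∀ (μ : Measure X) (ν : Measure Y),
      transportCost h μ ν = transportCost (fun q => h (q.2, q.1)) ν μ :=
    fun μ ν => transport_swap h hm μ ν
  have key : ∀ (ρ₁ ρ₂ : Measure X) (θ₁ θ₂ : Measure Y)
      [IsProbabilityMeasure ρ₁] [IsProbabilityMeasure ρ₂]
      [IsProbabilityMeasure θ₁] [IsProbabilityMeasure θ₂],
      transportCost h ρ₁ θ₁ ≤ transportCost h ρ₂ θ₂ +
        (ρ₁.toSignedMeasure - ρ₂.toSignedMeasure).totalVariation Set.univ +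
        (θ₁.toSignedMeasure - θ₂.toSignedMeasure).totalVariation Set.univ := by
    intro ρ₁ ρ₂ θ₁ θ₂ i1 i2 i3 i4
    haveI := i1; haveI := i2; haveI := i3; haveI := i4
    have step1 : transportCost h ρ₁ θ₁ ≤ transportCost h ρ₂ θ₁ +
        (ρ₁.toSignedMeasure - ρ₂.toSignedMeasure).totalVariation Set.univ :=
      transport_step h h1 ρ₁ ρ₂ θ₁
    have step2 : transportCost h ρ₂ θ₁ ≤ transportCost h ρ₂ θ₂ +
        (θ₁.toSignedMeasure - θ₂.toSignedMeasure).totalVariation Set.univ := by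
      rw [hswap ρ₂ θ₁, hswap ρ₂ θ₂]
      exact transport_step (fun q => h (q.2, q.1)) h1' θ₁ θ₂ ρ₂
    calc transportCost h ρ₁ θ₁
        ≤ transportCost h ρ₂ θ₁ +
          (ρ₁.toSignedMeasure - ρ₂.toSignedMeasure).totalVariation Set.univ := step1
      _ ≤ (transportCost h ρ₂ θ₂ +
          (θ₁.toSignedMeasure - θ₂.toSignedMeasure).totalVariation Set.univ) +
          (ρ₁.toSignedMeasure - ρ₂.toSignedMeasure).totalVariation Set.univ :=
          add_le_add_left step2 _
      _ = _ := by rw [add_right_comm]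
  have ha : transportCost h μ₁ ν₁ ≤ transportCost h μ₂ ν₂ + Dμ + Dν :=
    key μ₁ μ₂ ν₁ ν₂
  have hb : transportCost h μ₂ ν₂ ≤ transportCost h μ₁ ν₁ + Dμ + Dν := by
    have := key μ₂ μ₁ ν₂ ν₁
    rwa [hDμ', hDν'] at this
  have hfin1 : transportCost h μ₁ ν₁ ≠ ∞ :=
    ((transport_le_one h h1 μ₁ ν₁).trans_lt ENNReal.one_lt_top).ne
  have hfin2 : transportCost h μ₂ ν₂ ≠ ∞ :=
    ((transport_le_one h h1 μ₂ ν₂).trans_lt ENNReal.one_lt_top).ne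
  have hDμfin : Dμ ≠ ∞ := by
    rw [hDμ, SignedMeasure.totalVariation, Measure.add_apply]
    exact ENNReal.add_ne_top.mpr ⟨measure_ne_top _ _, measure_ne_top _ _⟩
  have hDνfin : Dν ≠ ∞ := by
    rw [hDν, SignedMeasure.totalVariation, Measure.add_apply]
    exact ENNReal.add_ne_top.mpr ⟨measure_ne_top _ _, measure_ne_top _ _⟩
  have ha' : (transportCost h μ₁ ν₁).toReal ≤ (transportCost h μ₂ ν₂).toReal +
      Dμ.toReal + Dν.toReal := by
    have := ENNReal.toReal_mono (by finiteness) ha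
    rwa [ENNReal.toReal_add (by finiteness) hDνfin,
      ENNReal.toReal_add hfin2 hDμfin] at this
  have hb' : (transportCost h μ₂ ν₂).toReal ≤ (transportCost h μ₁ ν₁).toReal +
      Dμ.toReal + Dν.toReal := by
    have := ENNReal.toReal_mono (by finiteness) hb
    rwa [ENNReal.toReal_add (by finiteness) hDνfin,
      ENNReal.toReal_add hfin1 hDμfin] at this
  rw [abs_sub_le_iff]
  constructor <;> linarith
end

section
/- Let X and Y be Polish spaces, let μ ∈ P(X), ν ∈ P(Y), and let h_n : X × Y → [0,∞) be lower semicontinuous cost functions increasing pointwise to a function h with K_h(μ,ν) < ∞. Let π_n ∈ Π(μ,ν) be optimal measures for h_n (i.e., ∫ h_n dπ_n = K_{h_n}(μ,ν)) converging weakly to a measure π. Then π is an optimal measure for h, i.e., ∫ h dπ = K_h(μ,ν); moreover K_h(μ,ν) = lim_{n→∞} K_{h_n}(μ,ν) = lim_{n→∞} ∫ h_n dπ_n. -/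
open MeasureTheory Filter Topology
open scoped ENNReal NNReal

/-- Portmanteau inequality for lower semicontinuous nonnegative functions. -/
lemma lsc_lintegral_le_liminf {Ω : Type*} [MeasurableSpace Ω] [TopologicalSpace Ω]
    [OpensMeasurableSpace Ω]
    {μ : Measure Ω} {μs : ℕ → Measure Ω} {f : Ω → ℝ} (f_lsc : LowerSemicontinuous f)
    (f_nn : 0 ≤ f)
    (h_opens : ∀ G, IsOpen G → μ G ≤ atTop.liminf (fun i ↦ μs i G)) :
    ∫⁻ x, ENNReal.ofReal (f x) ∂μ ≤ atTop.liminf (fun i ↦ ∫⁻ x, ENNReal.ofReal (f x) ∂(μs i)) := by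
  simp_rw [lintegral_eq_lintegral_meas_lt _ (Filter.Eventually.of_forall f_nn)
    f_lsc.measurable.aemeasurable]
  calc  ∫⁻ (t : ℝ) in Set.Ioi 0, μ {a | t < f a}
      ≤ ∫⁻ (t : ℝ) in Set.Ioi 0, atTop.liminf (fun i ↦ (μs i) {a | t < f a}) :=
        lintegral_mono (fun t ↦ h_opens _ (f_lsc.isOpen_preimage t))
    _ ≤ atTop.liminf (fun i ↦ ∫⁻ (t : ℝ) in Set.Ioi 0, (μs i) {a | t < f a}) :=
        lintegral_liminf_le (fun n ↦ Antitone.measurable (fun s t hst ↦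
          measure_mono (fun ω hω ↦ lt_of_le_of_lt hst hω)))

/-- Let X and Y be Polish spaces, μ ∈ P(X), ν ∈ P(Y), and h_n : X × Y → [0,∞) lower
semicontinuous cost functions increasing pointwise to h with K_h(μ,ν) < ∞. Let
π_n ∈ Π(μ,ν) be optimal measures for h_n converging weakly to π. Then π is optimal for h,
i.e. ∫ h dπ = K_h(μ,ν); moreover K_h(μ,ν) = lim_n K_{h_n}(μ,ν) = lim_n ∫ h_n dπ_n. -/
theorem stmt17 {X Y : Type*}
    [TopologicalSpace X] [PolishSpace X] [MeasurableSpace X] [BorelSpace X]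
    [TopologicalSpace Y] [PolishSpace Y] [MeasurableSpace Y] [BorelSpace Y]
    (μ : Measure X) (ν : Measure Y)
    [IsProbabilityMeasure μ] [IsProbabilityMeasure ν]
    (hn : ℕ → X × Y → ℝ) (h : X × Y → ℝ)
    (hlsc : ∀ n, LowerSemicontinuous (hn n)) (hnonneg : ∀ n p, 0 ≤ hn n p)
    (hmono : ∀ p, Monotone fun n => hn n p)
    (hlim : ∀ p, Tendsto (fun n => hn n p) atTop (nhds (h p)))
    (hfin : transportCost h μ ν ≠ ⊤)
    (π : ℕ → ProbabilityMeasure (X × Y)) (πlim : ProbabilityMeasure (X × Y))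
    (hπmarg : ∀ n, (π n : Measure (X × Y)).map Prod.fst = μ ∧
      (π n : Measure (X × Y)).map Prod.snd = ν)
    (hπopt : ∀ n, ∫⁻ p, ENNReal.ofReal (hn n p) ∂(π n : Measure (X × Y)) =
      transportCost (hn n) μ ν)
    (hπconv : Tendsto π atTop (nhds πlim)) :
    ((πlim : Measure (X × Y)).map Prod.fst = μ ∧
     (πlim : Measure (X × Y)).map Prod.snd = ν ∧
     ∫⁻ p, ENNReal.ofReal (h p) ∂(πlim : Measure (X × Y)) = transportCost h μ ν) ∧
    Tendsto (fun n => transportCost (hn n) μ ν) atTop (nhds (transportCost h μ ν)) ∧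
    Tendsto (fun n => ∫⁻ p, ENNReal.ofReal (hn n p) ∂(π n : Measure (X × Y))) atTop
      (nhds (transportCost h μ ν)) := by
  -- pointwise facts
  have hle : ∀ n p, hn n p ≤ h p := fun n p => (hmono p).ge_of_tendsto (hlim p) n
  have Fmeas : ∀ n, Measurable fun p => ENNReal.ofReal (hn n p) :=
    fun n => ENNReal.measurable_ofReal.comp (hlsc n).measurable
  have Fmono : Monotone fun n (p : X × Y) => ENNReal.ofReal (hn n p) :=
    fun m n hmn p => ENNReal.ofReal_le_ofReal (hmono p hmn)
  have Fsup : ∀ p : X × Y, (⨆ n, ENNReal.ofReal (hn n p)) = ENNReal.ofReal (h p) := by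
    intro p
    refine tendsto_nhds_unique
      (tendsto_atTop_iSup fun m n hmn => ENNReal.ofReal_le_ofReal (hmono p hmn)) ?_
    exact (ENNReal.continuous_ofReal.tendsto _).comp (hlim p)
  -- monotone convergence at πlim
  have MCT : ∫⁻ p, ENNReal.ofReal (h p) ∂(πlim : Measure (X × Y)) =
      ⨆ n, ∫⁻ p, ENNReal.ofReal (hn n p) ∂(πlim : Measure (X × Y)) := by
    rw [← lintegral_iSup Fmeas Fmono]
    exact lintegral_congr fun p => (Fsup p).symm
  -- monotonicity of transport costs
  have hKmono : Monotone fun n => transportCost (hn n) μ ν := fun m n hmn =>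
    iInf_mono fun σ => iInf_mono fun _ =>
      lintegral_mono fun p => ENNReal.ofReal_le_ofReal (hmono p hmn)
  have hKle : ∀ n, transportCost (hn n) μ ν ≤ transportCost h μ ν := fun n =>
    iInf_mono fun σ => iInf_mono fun _ =>
      lintegral_mono fun p => ENNReal.ofReal_le_ofReal (hle n p)
  -- metrizability of the product
  letI : PseudoMetricSpace (X × Y) := TopologicalSpace.pseudoMetrizableSpacePseudoMetric (X × Y)
  have h_opens : ∀ G, IsOpen G → (πlim : Measure (X × Y)) G ≤
      atTop.liminf fun i => (π i : Measure (X × Y)) G :=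
    fun G hG => ProbabilityMeasure.le_liminf_measure_open_of_tendsto hπconv hG
  -- key portmanteau inequality
  have key2 : ∀ n, (∫⁻ p, ENNReal.ofReal (hn n p) ∂(πlim : Measure (X × Y))) ≤
      atTop.liminf fun m => ∫⁻ p, ENNReal.ofReal (hn m p) ∂(π m : Measure (X × Y)) := by
    intro n
    refine (lsc_lintegral_le_liminf (hlsc n) (hnonneg n) h_opens).trans ?_
    exact liminf_le_liminf (eventually_atTop.2 ⟨n, fun m hm =>
      lintegral_mono fun p => ENNReal.ofReal_le_ofReal (hmono p hm)⟩)
  have hliminf_le : (atTop.liminf fun m => transportCost (hn m) μ ν) ≤ transportCost h μ ν :=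
    (liminf_le_liminf (Eventually.of_forall hKle)).trans_eq (liminf_const _)
  -- marginals of the limit
  have margfst : (πlim : Measure (X × Y)).map Prod.fst = μ := by
    have t1 := ProbabilityMeasure.tendsto_map_of_tendsto_of_continuous π πlim hπconv
      (continuous_fst : Continuous (Prod.fst : X × Y → X))
    have hconst : (fun n => (π n).map
        (continuous_fst.measurable.aemeasurable (μ := (π n : Measure (X × Y))))) =
        fun _ => (⟨μ, inferInstance⟩ : ProbabilityMeasure X) := by
      funext n
      apply ProbabilityMeasure.toMeasure_injective
      simp [(hπmarg n).1]
    rw [hconst] at t1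
    have := tendsto_nhds_unique t1 tendsto_const_nhds
    have := congrArg ProbabilityMeasure.toMeasure this
    simpa using this
  have margsnd : (πlim : Measure (X × Y)).map Prod.snd = ν := by
    have t1 := ProbabilityMeasure.tendsto_map_of_tendsto_of_continuous π πlim hπconv
      (continuous_snd : Continuous (Prod.snd : X × Y → Y))
    have hconst : (fun n => (π n).map
        (continuous_snd.measurable.aemeasurable (μ := (π n : Measure (X × Y))))) =
        fun _ => (⟨ν, inferInstance⟩ : ProbabilityMeasure Y) := by
      funext n
      apply ProbabilityMeasure.toMeasure_injective
      simp [(hπmarg n).2]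
    rw [hconst] at t1
    have := tendsto_nhds_unique t1 tendsto_const_nhds
    have := congrArg ProbabilityMeasure.toMeasure this
    simpa using this
  -- the chain of inequalities
  have hA_le : (∫⁻ p, ENNReal.ofReal (h p) ∂(πlim : Measure (X × Y))) ≤
      atTop.liminf fun m => transportCost (hn m) μ ν := by
    rw [MCT]
    refine iSup_le fun n => (key2 n).trans_eq ?_
    simp_rw [hπopt]
  have hK_le : transportCost h μ ν ≤
      ∫⁻ p, ENNReal.ofReal (h p) ∂(πlim : Measure (X × Y)) :=
    iInf₂_le (πlim : Measure (X × Y)) ⟨margfst, margsnd⟩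
  have hAeq : ∫⁻ p, ENNReal.ofReal (h p) ∂(πlim : Measure (X × Y)) = transportCost h μ ν :=
    le_antisymm (hA_le.trans hliminf_le) hK_le
  -- convergence of the costs
  have htend : Tendsto (fun n => transportCost (hn n) μ ν) atTop
      (nhds (⨆ n, transportCost (hn n) μ ν)) := tendsto_atTop_iSup hKmono
  have hsup_eq : (⨆ n, transportCost (hn n) μ ν) = transportCost h μ ν := by
    have hliminf_eq : atTop.liminf (fun m => transportCost (hn m) μ ν) =
        ⨆ n, transportCost (hn n) μ ν := htend.liminf_eq
    refine le_antisymm (iSup_le hKle) ?_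
    calc transportCost h μ ν ≤ ∫⁻ p, ENNReal.ofReal (h p) ∂(πlim : Measure (X × Y)) := hK_le
      _ ≤ atTop.liminf fun m => transportCost (hn m) μ ν := hA_le
      _ = ⨆ n, transportCost (hn n) μ ν := hliminf_eq
  rw [hsup_eq] at htend
  refine ⟨⟨margfst, margsnd, hAeq⟩, htend, ?_⟩
  have : (fun n => ∫⁻ p, ENNReal.ofReal (hn n p) ∂(π n : Measure (X × Y))) =
      fun n => transportCost (hn n) μ ν := funext hπopt
  rw [this]
  exact htend
end

section
/- Let (T, 𝒯) be a measurable space, let E be a Polish space, and let u_n : T → E be a sequence of 𝒯-measurable maps such that for every t ∈ T the set {u_n(t) : n ∈ ℕ} has compact closure in E. Then there exist 𝒯-measurable functions η_k : T → ℕ such that, for every t, the numbers η_k(t) are strictly increasing in k, the sequence u_{η_k(t)}(t) converges in E as k → ∞ to some point u(t), and the map t ↦ u(t) is 𝒯-measurable. -/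
open MeasureTheory Filter Topology

namespace Stmt18Aux

/-- `Nat.find` with classical decidability. -/
noncomputable def nfind {p : ℕ → Prop} (h : ∃ n, p n) : ℕ :=
  letI := Classical.decPred p
  Nat.find h

theorem nfind_spec {p : ℕ → Prop} (h : ∃ n, p n) : p (nfind h) := by
  letI := Classical.decPred p
  exact Nat.find_spec h

theorem nfind_eq_iff {p : ℕ → Prop} (h : ∃ n, p n) {n : ℕ} :
    nfind h = n ↔ p n ∧ ∀ m < n, ¬ p m := by
  letI := Classical.decPred p
  exact Nat.find_eq_iff h

theorem existsGt {s : Set ℕ} (hs : s.Infinite) (m : ℕ) : ∃ n, m < n ∧ n ∈ s := by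
  obtain ⟨b, hb, hlt⟩ := hs.exists_gt m
  exact ⟨b, hlt, hb⟩

theorem measurable_nfind {T : Type*} [MeasurableSpace T] {p : T → ℕ → Prop}
    (hp : ∀ t, ∃ n, p t n) (hm : ∀ n, MeasurableSet {t | p t n}) :
    Measurable fun t => nfind (hp t) := by
  apply measurable_to_countable'
  intro n
  have h : (fun t => nfind (hp t)) ⁻¹' {n} =
      {t | p t n} ∩ ⋂ m, ⋂ _ : m < n, {t | p t m}ᶜ := by
    ext t
    simp only [Set.mem_preimage, Set.mem_singleton_iff, nfind_eq_iff, Set.mem_inter_iff,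
      Set.mem_setOf_eq, Set.mem_iInter, Set.mem_compl_iff]
  rw [h]
  exact (hm n).inter (.iInter fun m => .iInter fun _ => (hm m).compl)

theorem meas_decomp {T : Type*} [MeasurableSpace T] {f : T → ℕ} (hf : Measurable f)
    {s : ℕ → Set T} (hs : ∀ q, MeasurableSet (s q)) : MeasurableSet {t | t ∈ s (f t)} := by
  have h : {t | t ∈ s (f t)} = ⋃ q, f ⁻¹' {q} ∩ s q := by
    ext t
    simp only [Set.mem_setOf_eq, Set.mem_iUnion, Set.mem_inter_iff, Set.mem_preimage,
      Set.mem_singleton_iff]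
    exact ⟨fun h => ⟨f t, rfl, h⟩, fun ⟨q, hq, h⟩ => hq ▸ h⟩
  rw [h]
  exact .iUnion fun q => (hf (measurableSet_singleton q)).inter (hs q)

section Metric

variable {T E : Type*} [MeasurableSpace T] [MetricSpace E] [CompleteSpace E]
  [SecondCountableTopology E] [Nonempty E] [MeasurableSpace E] [BorelSpace E]

/-- abbreviation for the dense sequence -/
noncomputable def xs : ℕ → E := TopologicalSpace.denseSeq E

theorem key (u : ℕ → T → E)
    (hcpt : ∀ t, IsCompact (closure (Set.range fun n => u n t))) (t : T)
    (S : Set ℕ) (hS : S.Infinite) {ε : ℝ} (hε : 0 < ε) :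
    ∃ (i : ℕ) (y : E), dist (xs i : E) y < ε ∧
      (∀ s : Set E, IsClosed s → (∀ n ∈ S, u n t ∈ s) → y ∈ s) ∧
      {n | dist (u n t) (xs i : E) < 2 * ε}.Infinite := by
  have hfr : ∃ᶠ n in atTop, n ∈ S := Nat.frequently_atTop_iff_infinite.2 hS
  have hne : (atTop ⊓ 𝓟 S).NeBot := by
    have := Filter.frequently_iff_neBot.1 hfr
    simpa [Set.setOf_mem_eq] using this
  set F := Filter.map (fun n => u n t) (atTop ⊓ 𝓟 S) with hF
  haveI : F.NeBot := hne.map _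
  have hFle : F ≤ 𝓟 (closure (Set.range fun n => u n t)) := by
    rw [le_principal_iff, mem_map]
    exact Filter.univ_mem' fun n => subset_closure (Set.mem_range_self n)
  obtain ⟨y, -, hy⟩ := (hcpt t).exists_clusterPt hFle
  obtain ⟨i, hi⟩ := Metric.denseRange_iff.1 (TopologicalSpace.denseRange_denseSeq E) y ε hε
  refine ⟨i, y, by rw [dist_comm]; exact hi, fun s hs hmem => ?_, ?_⟩
  · have hle : F ≤ 𝓟 s := by
      rw [le_principal_iff, mem_map]
      exact mem_inf_of_right (fun n hn => hmem n hn)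
    have := hy.mono hle
    rw [← hs.closure_eq]
    exact mem_closure_iff_clusterPt.2 this
  · have hfr2 : ∃ᶠ n in atTop ⊓ 𝓟 S, u n t ∈ Metric.ball y ε :=
      (mapClusterPt_iff_frequently.1 hy) _ (Metric.ball_mem_nhds _ hε)
    have hfr3 : ∃ᶠ n in atTop, dist (u n t) (xs i : E) < 2 * ε := by
      refine (hfr2.filter_mono inf_le_left).mono fun n hn => ?_
      have h1 : dist (u n t) y < ε := Metric.mem_ball.1 hn
      have h2 := dist_triangle (u n t) y (xs i : E)
      have h3 : dist y (xs i : E) < ε := hi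
      linarith
    exact Nat.frequently_atTop_iff_infinite.1 hfr3

theorem exists0 (u : ℕ → T → E)
    (hcpt : ∀ t, IsCompact (closure (Set.range fun n => u n t))) (t : T) :
    ∃ i, {n | dist (u n t) (xs i : E) < (1/4 : ℝ) ^ 0 / 2}.Infinite := by
  obtain ⟨i, y, -, -, hinf⟩ := key u hcpt t Set.univ Set.infinite_univ
    (ε := (1/4 : ℝ)) (by norm_num)
  refine ⟨i, hinf.mono fun n hn => ?_⟩
  simp only [Set.mem_setOf_eq] at hn ⊢
  norm_num
  linarith

theorem existsS (u : ℕ → T → E)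
    (hcpt : ∀ t, IsCompact (closure (Set.range fun n => u n t))) (t : T) (k p : ℕ)
    (h : {n | dist (u n t) (xs p : E) < (1/4 : ℝ) ^ k / 2}.Infinite) :
    ∃ i, (dist (xs i : E) (xs p : E) + (1/4 : ℝ) ^ (k+1) ≤ (1/4 : ℝ) ^ k ∧
      {n | dist (u n t) (xs i : E) < (1/4 : ℝ) ^ (k+1) / 2}.Infinite) := by
  obtain ⟨i, y, hiy, hcl, hinf⟩ := key u hcpt t _ h (ε := (1/4 : ℝ) ^ (k+1) / 4) (by positivity)
  have hyp : dist y (xs p : E) ≤ (1/4 : ℝ) ^ k / 2 := by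
    have := hcl (Metric.closedBall (xs p) ((1/4 : ℝ) ^ k / 2)) Metric.isClosed_closedBall
      (fun n hn => Metric.mem_closedBall.2 (le_of_lt hn))
    exact Metric.mem_closedBall.1 this
  have hpow : (1/4 : ℝ) ^ (k+1) = (1/4 : ℝ) ^ k * (1/4) := pow_succ _ _
  have hpos : (0 : ℝ) < (1/4 : ℝ) ^ k := by positivity
  refine ⟨i, ?_, ?_⟩
  · have := dist_triangle (xs i : E) y (xs p : E)
    linarith
  · refine hinf.mono fun n hn => ?_
    simp only [Set.mem_setOf_eq] at hn ⊢
    linarith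

/-- The recursively chosen centers, with the invariant that infinitely many points of the
sequence lie within half-radius of the center. -/
noncomputable def dataC (u : ℕ → T → E)
    (hcpt : ∀ t, IsCompact (closure (Set.range fun n => u n t))) (t : T) :
    (k : ℕ) → {p : ℕ // {n | dist (u n t) (xs p : E) < (1/4 : ℝ) ^ k / 2}.Infinite}
  | 0 => ⟨nfind (exists0 u hcpt t), nfind_spec (exists0 u hcpt t)⟩
  | (k+1) =>
    ⟨nfind (existsS u hcpt t k (dataC u hcpt t k).1 (dataC u hcpt t k).2),
      (nfind_spec (existsS u hcpt t k (dataC u hcpt t k).1 (dataC u hcpt t k).2)).2⟩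

/-- The chosen subsequence indices. -/
noncomputable def etaD (u : ℕ → T → E)
    (hcpt : ∀ t, IsCompact (closure (Set.range fun n => u n t))) (t : T) : ℕ → ℕ
  | 0 => nfind (dataC u hcpt t 0).2.nonempty
  | (k+1) => nfind (existsGt (dataC u hcpt t (k+1)).2 (etaD u hcpt t k))

theorem measInf (u : ℕ → T → E) (hu : ∀ n, Measurable (u n)) (i : ℕ) (r : ℝ) :
    MeasurableSet {t : T | {n | dist (u n t) (xs i : E) < r}.Infinite} := by
  have h : {t : T | {n | dist (u n t) (xs i : E) < r}.Infinite} =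
      ⋂ N, ⋃ n, ⋃ _ : N ≤ n, {t | dist (u n t) (xs i : E) < r} := by
    ext t
    simp only [Set.mem_setOf_eq, ← Nat.frequently_atTop_iff_infinite, Filter.frequently_atTop,
      Set.mem_iInter, Set.mem_iUnion]
    constructor
    · intro h N; obtain ⟨n, hn, h2⟩ := h N; exact ⟨n, hn, h2⟩
    · intro h N; obtain ⟨n, hn, h2⟩ := h N; exact ⟨n, hn, h2⟩
  rw [h]
  refine .iInter fun N => .iUnion fun n => .iUnion fun _ => ?_
  exact measurableSet_lt ((hu n).dist measurable_const) measurable_const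

theorem meas_dataC (u : ℕ → T → E)
    (hcpt : ∀ t, IsCompact (closure (Set.range fun n => u n t)))
    (hu : ∀ n, Measurable (u n)) :
    ∀ k, Measurable fun t => (dataC u hcpt t k).1 := by
  intro k
  induction k with
  | zero =>
    exact measurable_nfind (fun t => exists0 u hcpt t) fun i => measInf u hu i _
  | succ k ih =>
    have heq : (fun t => (dataC u hcpt t (k+1)).1) =
        fun t => nfind (existsS u hcpt t k (dataC u hcpt t k).1 (dataC u hcpt t k).2) := rfl
    rw [heq]
    refine measurable_nfind _ fun i => ?_
    have h : {t | dist (xs i : E) (xs ((dataC u hcpt t k).1) : E) + (1/4 : ℝ) ^ (k+1)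
          ≤ (1/4 : ℝ) ^ k ∧
        {n | dist (u n t) (xs i : E) < (1/4 : ℝ) ^ (k+1) / 2}.Infinite} =
        {t | t ∈ (fun q => ({t' : T | dist (xs i : E) (xs q : E) + (1/4 : ℝ) ^ (k+1)
            ≤ (1/4 : ℝ) ^ k} ∩
          {t' : T | {n | dist (u n t') (xs i : E) < (1/4 : ℝ) ^ (k+1) / 2}.Infinite}))
          ((dataC u hcpt t k).1)} := by
      ext t
      simp only [Set.mem_setOf_eq, Set.mem_inter_iff]
    rw [h]
    exact meas_decomp ih (s := fun q => ({t' : T | dist (xs i : E) (xs q : E) + (1/4 : ℝ) ^ (k+1)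
        ≤ (1/4 : ℝ) ^ k} ∩
      {t' : T | {n | dist (u n t') (xs i : E) < (1/4 : ℝ) ^ (k+1) / 2}.Infinite}))
      fun q => (MeasurableSet.const _).inter (measInf u hu i _)

theorem meas_etaD (u : ℕ → T → E)
    (hcpt : ∀ t, IsCompact (closure (Set.range fun n => u n t)))
    (hu : ∀ n, Measurable (u n)) :
    ∀ k, Measurable fun t => etaD u hcpt t k := by
  intro k
  induction k with
  | zero =>
    have heq : (fun t => etaD u hcpt t 0) = fun t => nfind (dataC u hcpt t 0).2.nonempty := rfl
    rw [heq]
    refine measurable_nfind _ fun n => ?_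
    have h : {t : T | n ∈ {m | dist (u m t) (xs ((dataC u hcpt t 0).1) : E)
          < (1/4 : ℝ) ^ 0 / 2}} =
        {t | t ∈ (fun q => {t' : T | dist (u n t') (xs q : E) < (1/4 : ℝ) ^ 0 / 2})
          ((dataC u hcpt t 0).1)} := by
      ext t; simp only [Set.mem_setOf_eq]
    rw [h]
    exact meas_decomp (meas_dataC u hcpt hu 0) fun q =>
      measurableSet_lt ((hu n).dist measurable_const) measurable_const
  | succ k ih =>
    have heq : (fun t => etaD u hcpt t (k+1)) =
        fun t => nfind (existsGt (dataC u hcpt t (k+1)).2 (etaD u hcpt t k)) := rfl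
    rw [heq]
    refine measurable_nfind _ fun n => ?_
    have h : {t : T | etaD u hcpt t k < n ∧
        n ∈ {m | dist (u m t) (xs ((dataC u hcpt t (k+1)).1) : E) < (1/4 : ℝ) ^ (k+1) / 2}} =
        ((fun t => etaD u hcpt t k) ⁻¹' {m | m < n}) ∩
        {t | t ∈ (fun q => {t' : T | dist (u n t') (xs q : E) < (1/4 : ℝ) ^ (k+1) / 2})
          ((dataC u hcpt t (k+1)).1)} := by
      ext t; simp only [Set.mem_setOf_eq, Set.mem_inter_iff, Set.mem_preimage]
    rw [h]
    exact (ih (show MeasurableSet {m : ℕ | m < n} from trivial)).inter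
      (meas_decomp (meas_dataC u hcpt hu (k+1)) fun q =>
        measurableSet_lt ((hu n).dist measurable_const) measurable_const)

theorem main (u : ℕ → T → E)
    (hcpt : ∀ t, IsCompact (closure (Set.range fun n => u n t)))
    (hu : ∀ n, Measurable (u n)) : ∃ η : ℕ → T → ℕ, ∃ v : T → E,
    (∀ k, Measurable (η k)) ∧ Measurable v ∧
    ∀ t, StrictMono (fun k => η k t) ∧
      Tendsto (fun k => u (η k t) t) atTop (nhds (v t)) := by
  classical
  have hball : ∀ t k, dist (u (etaD u hcpt t k) t) (xs ((dataC u hcpt t k).1) : E)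
      < (1/4 : ℝ) ^ k / 2 := by
    intro t k
    cases k with
    | zero => exact nfind_spec (dataC u hcpt t 0).2.nonempty
    | succ k => exact (nfind_spec (existsGt (dataC u hcpt t (k+1)).2 (etaD u hcpt t k))).2
  have hnest : ∀ t k, Metric.ball (xs ((dataC u hcpt t (k+1)).1) : E) ((1/4 : ℝ) ^ (k+1)) ⊆
      Metric.ball (xs ((dataC u hcpt t k).1) : E) ((1/4 : ℝ) ^ k) := by
    intro t k
    refine Metric.ball_subset_ball' ?_
    have h : dist (xs ((dataC u hcpt t (k+1)).1) : E) (xs ((dataC u hcpt t k).1) : E)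
        + (1/4 : ℝ) ^ (k+1) ≤ (1/4 : ℝ) ^ k :=
      (nfind_spec (existsS u hcpt t k (dataC u hcpt t k).1 (dataC u hcpt t k).2)).1
    linarith
  have hmem : ∀ t (d k : ℕ), u (etaD u hcpt t (k + d)) t ∈
      Metric.ball (xs ((dataC u hcpt t k).1) : E) ((1/4 : ℝ) ^ k) := by
    intro t d
    induction d with
    | zero =>
      intro k
      have h1 := hball t k
      have hpos : (0 : ℝ) < (1/4 : ℝ) ^ k := by positivity
      simp only [Nat.add_zero]
      rw [Metric.mem_ball]
      linarith
    | succ d ih =>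
      intro k
      have h1 := ih (k+1)
      have h2 := hnest t k h1
      have h3 : k + (d + 1) = (k + 1) + d := by omega
      rw [h3]
      exact h2
  have hdist : ∀ t (N k l : ℕ), N ≤ k → N ≤ l →
      dist (u (etaD u hcpt t k) t) (u (etaD u hcpt t l) t) ≤ 2 * (1/4 : ℝ) ^ N := by
    intro t N k l hk hl
    obtain ⟨d1, rfl⟩ := Nat.exists_eq_add_of_le hk
    obtain ⟨d2, rfl⟩ := Nat.exists_eq_add_of_le hl
    have h1 := Metric.mem_ball.1 (hmem t d1 N)
    have h2 := Metric.mem_ball.1 (hmem t d2 N)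
    have h3 := dist_triangle (u (etaD u hcpt t (N + d1)) t) (xs ((dataC u hcpt t N).1) : E)
      (u (etaD u hcpt t (N + d2)) t)
    rw [dist_comm (xs ((dataC u hcpt t N).1) : E)] at h3
    linarith
  have hcauchy : ∀ t, CauchySeq (fun k => u (etaD u hcpt t k) t) := by
    intro t
    refine cauchySeq_of_le_tendsto_0 (fun N => 2 * (1/4 : ℝ) ^ N)
      (fun k l N hk hl => hdist t N k l hk hl) ?_
    have := (tendsto_pow_atTop_nhds_zero_of_lt_one (by norm_num : (0:ℝ) ≤ 1/4)
      (by norm_num : (1/4 : ℝ) < 1)).const_mul (2 : ℝ)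
    simpa using this
  choose v hv using fun t => cauchySeq_tendsto_of_complete (hcauchy t)
  refine ⟨fun k t => etaD u hcpt t k, v, fun k => meas_etaD u hcpt hu k, ?_,
    fun t => ⟨?_, hv t⟩⟩
  · refine measurable_of_tendsto_metrizable (f := fun k t => u (etaD u hcpt t k) t)
      (fun k => ?_) (tendsto_pi_nhds.2 hv)
    have h1 : Measurable fun p : T × ℕ => u p.2 p.1 :=
      measurable_from_prod_countable_left fun n => hu n
    exact h1.comp (measurable_id.prodMk (meas_etaD u hcpt hu k))
  · refine strictMono_nat_of_lt_succ fun k => ?_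
    exact (nfind_spec (existsGt (dataC u hcpt t (k+1)).2 (etaD u hcpt t k))).1

end Metric

end Stmt18Aux

/-- Let (T, 𝒯) be a measurable space, E a Polish space, and u_n : T → E a sequence of
𝒯-measurable maps such that for every t the set {u_n(t) : n ∈ ℕ} has compact closure in E.
Then there exist 𝒯-measurable functions η_k : T → ℕ such that, for every t, the numbers
η_k(t) are strictly increasing in k, the sequence u_{η_k(t)}(t) converges in E to some
point u(t), and the map t ↦ u(t) is 𝒯-measurable. -/
theorem stmt18 {T E : Type*} [MeasurableSpace T]
    [TopologicalSpace E] [PolishSpace E] [MeasurableSpace E] [BorelSpace E]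
    (u : ℕ → T → E) (hu : ∀ n, Measurable (u n))
    (hcpt : ∀ t, IsCompact (closure (Set.range fun n => u n t))) :
    ∃ η : ℕ → T → ℕ, ∃ v : T → E,
      (∀ k, Measurable (η k)) ∧ Measurable v ∧
      ∀ t, StrictMono (fun k => η k t) ∧
        Tendsto (fun k => u (η k t) t) atTop (nhds (v t)) := by
  rcases isEmpty_or_nonempty E with hE | hE
  · haveI : IsEmpty T := ⟨fun t => IsEmpty.false (u 0 t)⟩
    exact ⟨fun k t => k, fun t => isEmptyElim t, fun k => measurable_const,
      measurable_of_empty _, fun t => isEmptyElim t⟩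
  · letI := TopologicalSpace.upgradeIsCompletelyMetrizable E
    exact Stmt18Aux.main u hcpt hu
end
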